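/- Let s ≥ 2, let p_1, …, p_s ∈ ℝ × ℝ^d, p_i = (p_{i0}, p̄_i), with p̄_1, …, p̄_s affinely independent, and let p* = (p_0*, p̄*) ∈ ℝ × ℝ^d. Let M be the d × (s−1) real matrix with columns p̄_2 − p̄_1, …, p̄_s − p̄_1 (so MᵀM is invertible), let c ∈ ℝ^{s−1} have entries c_i = p_{(i+1)0} − p_{10}, let b ∈ ℝ^{s−1} have entries b_i = (1/2)(‖p̄_{i+1}‖² − p_{(i+1)0}² − ‖p̄_1‖² + p_{10}²), and set u = (MᵀM)⁻¹(b − Mᵀp̄_1), v = (MᵀM)⁻¹c, and z = (p̄* − p̄_1) − M(MᵀM)⁻¹Mᵀ(p̄* − p̄_1). If x = (x_0, x̄) satisfies ‖p̄_i − x̄‖ = p_{i0} − x_0 for all i = 1, …, s and x̄ lies in the affine span of {p̄_1, …, p̄_s, p̄*}, then x_0 ≤ min{p_{i0} : i = 1, …, s} and there exists α* ∈ ℝ such that x̄ = M(u + x_0·v) + α*·z + p̄_1 and (α*)²·‖z‖² + ‖M(u + x_0·v)‖² − (p_{10} − x_0)² = 0. -/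

import Mathlib

/-- Points on the curve: if `x` keeps all constraints of `S = {p 0, …, p k}` active and
`x̄` lies in the affine span of `S̄ ∪ {p̄*}`, then `x̄ = M(u + x₀ v) + α* z + p̄₁` for some
`α*` with `(α*)²‖z‖² + ‖M(u + x₀ v)‖² - (p₁₀ - x₀)² = 0`, and `x₀ ≤ min_i p_{i0}`.
Here the matrix `M` has columns `col j = p̄_{j+1} - p̄₁`, the vectors `u`, `v`, `w` are
characterized by the (invertible, since `S̄` is affinely independent) Gram system
`MᵀM u = b - Mᵀp̄₁`, `MᵀM v = c`, `MᵀM w = Mᵀ(p̄* - p̄₁)`, and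
`z = (I - M(MᵀM)⁻¹Mᵀ)(p̄* - p̄₁) = (p̄* - p̄₁) - M w`. -/
theorem stmt_15 (d k : ℕ) (hd : 1 ≤ d) (hk : 1 ≤ k)
    (p : Fin (k + 1) → ℝ × EuclideanSpace ℝ (Fin d))
    (pstar : ℝ × EuclideanSpace ℝ (Fin d))
    (hindep : AffineIndependent ℝ (fun i => (p i).2))
    (col : Fin k → EuclideanSpace ℝ (Fin d))
    (hcol : ∀ j, col j = (p j.succ).2 - (p 0).2)
    (b c : Fin k → ℝ)
    (hb : ∀ j, b j =
      (‖(p j.succ).2‖ ^ 2 - (p j.succ).1 ^ 2 - ‖(p 0).2‖ ^ 2 + (p 0).1 ^ 2) / 2)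
    (hc : ∀ j, c j = (p j.succ).1 - (p 0).1)
    (u v w : Fin k → ℝ)
    (hu : ∀ j, ∑ j', (inner ℝ (col j) (col j') : ℝ) * u j' =
      b j - (inner ℝ (col j) ((p 0).2) : ℝ))
    (hv : ∀ j, ∑ j', (inner ℝ (col j) (col j') : ℝ) * v j' = c j)
    (hw : ∀ j, ∑ j', (inner ℝ (col j) (col j') : ℝ) * w j' =
      (inner ℝ (col j) (pstar.2 - (p 0).2) : ℝ))
    (z : EuclideanSpace ℝ (Fin d))
    (hz : z = (pstar.2 - (p 0).2) - ∑ j, w j • col j)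
    (x : ℝ × EuclideanSpace ℝ (Fin d))
    (hx : ∀ i, ‖(p i).2 - x.2‖ = (p i).1 - x.1)
    (haff : x.2 ∈ affineSpan ℝ (Set.range (fun i => (p i).2) ∪ {pstar.2})) :
    (∀ i, x.1 ≤ (p i).1) ∧
    ∃ α : ℝ,
      x.2 = (∑ j, (u j + x.1 * v j) • col j) + α • z + (p 0).2 ∧
      α ^ 2 * ‖z‖ ^ 2 + ‖∑ j, (u j + x.1 * v j) • col j‖ ^ 2 -
        ((p 0).1 - x.1) ^ 2 = 0 := by
  classical
  have hx1 : ∀ i, x.1 ≤ (p i).1 := by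
    intro i
    have h1 := hx i
    have h2 := norm_nonneg ((p i).2 - x.2)
    linarith
  refine ⟨hx1, ?_⟩
  set P : EuclideanSpace ℝ (Fin d) := (p 0).2 with hPdef
  set t : Fin k → ℝ := fun j => u j + x.1 * v j with ht
  -- orthogonality of z to the columns
  have hzc : ∀ j, (inner ℝ (col j) z : ℝ) = 0 := by
    intro j
    rw [hz, inner_sub_right, inner_sum]
    have : ∀ j', (inner ℝ (col j) (w j' • col j') : ℝ)
        = (inner ℝ (col j) (col j') : ℝ) * w j' := by
      intro j'; rw [real_inner_smul_right]; ring
    rw [Finset.sum_congr rfl (fun j' _ => this j'), hw j]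
    ring
  -- inner products of col j with x.2 - P
  have hGt : ∀ j, (inner ℝ (col j) (x.2 - P) : ℝ)
      = ∑ j', (inner ℝ (col j) (col j') : ℝ) * t j' := by
    intro j
    have e1 : ‖(p j.succ).2 - x.2‖ ^ 2 = ((p j.succ).1 - x.1) ^ 2 := by rw [hx j.succ]
    have e0 : ‖P - x.2‖ ^ 2 = ((p 0).1 - x.1) ^ 2 := by rw [hPdef, hx 0]
    rw [norm_sub_sq_real] at e1 e0
    have hsum : ∑ j', (inner ℝ (col j) (col j') : ℝ) * t j'
        = (b j - (inner ℝ (col j) P : ℝ)) + x.1 * c j := by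
      have : ∀ j', (inner ℝ (col j) (col j') : ℝ) * t j'
          = (inner ℝ (col j) (col j') : ℝ) * u j'
            + x.1 * ((inner ℝ (col j) (col j') : ℝ) * v j') := by
        intro j'; simp only [ht]; ring
      rw [Finset.sum_congr rfl (fun j' _ => this j'), Finset.sum_add_distrib,
        ← Finset.mul_sum, hu j, hv j, hPdef]
    have hbj := hb j
    have hcj := hc j
    rw [hsum]
    simp only [hcol j, inner_sub_left, inner_sub_right]
    linear_combination (1/2) * e0 - (1/2) * e1 - hbj - x.1 * hcj
  -- membership in the span of cols and z
  let f : Option (Fin k) → EuclideanSpace ℝ (Fin d) := fun o => o.elim z col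
  have hmem : x.2 - P ∈ Submodule.span ℝ (Set.range f) := by
    have hPin : P ∈ (Set.range (fun i => (p i).2) ∪ {pstar.2}) := by
      left; exact ⟨0, rfl⟩
    have hxin : x.2 -ᵥ P ∈ vectorSpan ℝ (Set.range (fun i => (p i).2) ∪ {pstar.2}) := by
      rw [← direction_affineSpan]
      exact AffineSubspace.vsub_mem_direction haff (mem_affineSpan ℝ hPin)
    rw [vectorSpan_eq_span_vsub_set_right ℝ hPin] at hxin
    have hle : Submodule.span ℝ ((· -ᵥ P) '' (Set.range (fun i => (p i).2) ∪ {pstar.2}))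
        ≤ Submodule.span ℝ (Set.range f) := by
      rw [Submodule.span_le]
      rintro _ ⟨q, hq, rfl⟩
      rcases hq with ⟨i, rfl⟩ | hq
      · refine Fin.cases ?_ ?_ i
        · simp only [vsub_eq_sub, hPdef, sub_self]
          exact Submodule.zero_mem _
        · intro j
          have heq : (fun y => y -ᵥ P) ((fun i => (p i).2) j.succ) = f (some j) := by
            simp only [vsub_eq_sub, f, Option.elim, hcol j, hPdef]
          rw [heq]
          exact Submodule.subset_span ⟨some j, rfl⟩
      · simp only [Set.mem_singleton_iff] at hq
        subst hq
        have heq : (fun y => y -ᵥ P) pstar.2 = f none + ∑ j, w j • f (some j) := by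
          simp only [vsub_eq_sub, f, Option.elim, hz, hPdef]
          abel
        rw [heq]
        refine Submodule.add_mem _ (Submodule.subset_span ⟨none, rfl⟩) ?_
        exact Submodule.sum_mem _ fun j _ =>
          Submodule.smul_mem _ _ (Submodule.subset_span ⟨some j, rfl⟩)
    have := hle hxin
    simpa using this
  rw [Submodule.mem_span_range_iff_exists_fun ℝ] at hmem
  obtain ⟨γ, hγ⟩ := hmem
  rw [Fintype.sum_option] at hγ
  set α := γ none with hα
  set g : Fin k → ℝ := fun j => γ (some j) with hg
  have hxP : x.2 - P = α • z + ∑ j, g j • col j := hγ.symm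
  have hGg : ∀ j, ∑ j', (inner ℝ (col j) (col j') : ℝ) * g j'
      = ∑ j', (inner ℝ (col j) (col j') : ℝ) * t j' := by
    intro j
    have h1 : (inner ℝ (col j) (x.2 - P) : ℝ)
        = α * (inner ℝ (col j) z : ℝ) + ∑ j', (inner ℝ (col j) (col j') : ℝ) * g j' := by
      rw [hxP, inner_add_right, real_inner_smul_right, inner_sum]
      congr 1
      exact Finset.sum_congr rfl fun j' _ => by rw [real_inner_smul_right]; ring
    rw [hGt j, hzc j] at h1
    linarith [h1]
  have hD : ∑ j, g j • col j = ∑ j, t j • col j := by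
    have hin : (inner ℝ (∑ j, (g j - t j) • col j) (∑ j', (g j' - t j') • col j') : ℝ) = 0 := by
      rw [sum_inner]
      refine Finset.sum_eq_zero fun j _ => ?_
      rw [real_inner_smul_left]
      have hcolD : (inner ℝ (col j) (∑ j', (g j' - t j') • col j') : ℝ) = 0 := by
        rw [inner_sum]
        have hterm : ∀ j', (inner ℝ (col j) ((g j' - t j') • col j') : ℝ)
            = (inner ℝ (col j) (col j') : ℝ) * g j'
              - (inner ℝ (col j) (col j') : ℝ) * t j' := by
          intro j'; rw [real_inner_smul_right]; ring
        rw [Finset.sum_congr rfl fun j' _ => hterm j', Finset.sum_sub_distrib, hGg j, sub_self]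
      rw [hcolD]; ring
    have hDzero : (∑ j, (g j - t j) • col j) = 0 := inner_self_eq_zero.mp hin
    have hsub : (∑ j, g j • col j) - (∑ j, t j • col j) = 0 := by
      rw [← Finset.sum_sub_distrib]
      rw [← hDzero]
      exact Finset.sum_congr rfl fun j _ => (sub_smul _ _ _).symm
    exact sub_eq_zero.mp hsub
  have hst : x.2 - P = (∑ j, t j • col j) + α • z := by rw [hxP, hD]; abel
  have htg : ∑ j, (u j + x.1 * v j) • col j = ∑ j, t j • col j := rfl
  refine ⟨α, ?_, ?_⟩
  · rw [htg]
    have := eq_add_of_sub_eq hst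
    rw [this]
  · have e0 : ‖P - x.2‖ ^ 2 = ((p 0).1 - x.1) ^ 2 := by rw [hPdef, hx 0]
    rw [norm_sub_rev] at e0
    have hsz : (inner ℝ (∑ j, t j • col j) z : ℝ) = 0 := by
      rw [sum_inner]
      exact Finset.sum_eq_zero fun j _ => by rw [real_inner_smul_left, hzc j]; ring
    have hxPn : ‖x.2 - P‖ ^ 2 = ‖∑ j, t j • col j‖ ^ 2 + α ^ 2 * ‖z‖ ^ 2 := by
      rw [hst, norm_add_sq_real, real_inner_smul_right, hsz, norm_smul]
      simp only [Real.norm_eq_abs, mul_pow, sq_abs]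
      ring
    rw [htg]
    linarith [e0, hxPn]
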